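/- With the same notation, if g ∈ t·B_{ℓ∞(S_E)} satisfies div g ≠ ψ̃, then ‖u₀ − div(Tg)‖_{ℓ²(S_V)} < ‖u₀ − div g‖_{ℓ²(S_V)} (strict decrease). -/
import Mathlib


/-- Gradient operator on a directed graph with edge source/target maps. -/
def grad {V E : Type*} (src tgt : E → V) (f : V → ℝ) : E → ℝ :=
  fun e => f (tgt e) - f (src e)

/-- Divergence operator on a directed graph: incoming minus outgoing flow. -/
def gdiv {V E : Type*} [Fintype E] [DecidableEq V] (src tgt : E → V) (g : E → ℝ) : V → ℝ :=
  fun v => (∑ e : E, if tgt e = v then g e else 0) - (∑ e : E, if src e = v then g e else 0)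

/-- Connectedness of the underlying undirected graph. -/
def GConnected {V E : Type*} (src tgt : E → V) : Prop :=
  ∀ v w : V, Relation.ReflTransGen
    (fun a b => ∃ e : E, (src e = a ∧ tgt e = b) ∨ (src e = b ∧ tgt e = a)) v w

/-- Projection (clamp) of `x` onto the interval `[-t, t]`. -/
noncomputable def clamp (t x : ℝ) : ℝ := max (-t) (min t x)

/-- Divergence ignoring the flow on the edge `k`. -/
def divWo {V E : Type*} [Fintype E] [DecidableEq V] (src tgt : E → V) (k : E)
    (g : E → ℝ) : V → ℝ :=
  fun v => gdiv src tgt g v + (if src k = v then g k else 0) - (if tgt k = v then g k else 0)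

/-- The optimal new value for the flow on the edge `k` before clamping. -/
noncomputable def Kg {V E : Type*} [Fintype E] [DecidableEq V] (src tgt : E → V) (u₀ : V → ℝ)
    (g : E → ℝ) (k : E) : ℝ :=
  ((u₀ (tgt k) - divWo src tgt k g (tgt k)) - (u₀ (src k) - divWo src tgt k g (src k))) / 2

/-- The single-edge coordinate-descent update operator `T_k`. -/
noncomputable def Tk {V E : Type*} [Fintype E] [DecidableEq V] [DecidableEq E]
    (src tgt : E → V) (u₀ : V → ℝ) (t : ℝ) (k : E) (g : E → ℝ) : E → ℝ :=
  Function.update g k (clamp t (Kg src tgt u₀ g k))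


section Aux
variable {V E : Type*} [Fintype V] [Fintype E] [DecidableEq V] [DecidableEq E]
variable (src tgt : E → V) (u₀ : V → ℝ)

lemma gdiv_update (g : E → ℝ) (k : E) (s : ℝ) (v : V) :
    gdiv src tgt (Function.update g k s) v =
      divWo src tgt k g v - (if src k = v then s else 0) + (if tgt k = v then s else 0) := by
  have h1 : ∀ (p : E → V),
      ∑ e, (if p e = v then Function.update g k s e else 0)
        = (∑ e, (if p e = v then g e else 0)) + (if p k = v then s - g k else 0) := by
    intro p
    have h2 : ∑ e, ((if p e = v then Function.update g k s e else 0)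
        - (if p e = v then g e else 0)) = (if p k = v then s - g k else 0) := by
      rw [Fintype.sum_eq_single k (fun e he => by simp [Function.update_of_ne he])]
      split_ifs <;> simp
    rw [Finset.sum_sub_distrib] at h2
    linarith
  unfold divWo gdiv
  rw [h1, h1]
  split_ifs <;> ring

lemma divWo_update (g : E → ℝ) (k : E) (s : ℝ) (v : V) :
    divWo src tgt k (Function.update g k s) v = divWo src tgt k g v := by
  unfold divWo
  rw [gdiv_update]
  simp [divWo]
  split_ifs <;> ring

end Aux

section Aux2
set_option linter.unusedSectionVars false
variable {V E : Type*} [Fintype V] [Fintype E] [DecidableEq V] [DecidableEq E]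
variable (src tgt : E → V) (u₀ : V → ℝ)

lemma gdiv_update_loop (g : E → ℝ) (k : E) (s : ℝ) (hk : src k = tgt k) (v : V) :
    gdiv src tgt (Function.update g k s) v = gdiv src tgt g v := by
  rw [gdiv_update]
  unfold divWo
  rw [hk]
  split_ifs <;> ring

lemma F_update (g : E → ℝ) (k : E) (hk : src k ≠ tgt k) (s : ℝ) :
    ∑ v, (u₀ v - gdiv src tgt (Function.update g k s) v) ^ 2
      = (∑ v, (u₀ v - divWo src tgt k g v) ^ 2)
        - 4 * Kg src tgt u₀ g k * s + 2 * s ^ 2 := by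
  have key : ∀ v, (u₀ v - gdiv src tgt (Function.update g k s) v) ^ 2
      = (u₀ v - divWo src tgt k g v) ^ 2
        + 2 * s * ((if src k = v then (u₀ v - divWo src tgt k g v) else 0)
            - (if tgt k = v then (u₀ v - divWo src tgt k g v) else 0))
        + s ^ 2 * ((if src k = v then (1:ℝ) else 0) + (if tgt k = v then (1:ℝ) else 0)) := by
    intro v
    rw [gdiv_update]
    by_cases h1 : src k = v <;> by_cases h2 : tgt k = v
    · exact absurd (h1.trans h2.symm) hk
    all_goals simp only [h1, h2, if_true, if_false, if_pos, if_neg, ite_true, ite_false] <;> ring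
  rw [Finset.sum_congr rfl (fun v _ => key v)]
  rw [Finset.sum_add_distrib, Finset.sum_add_distrib, ← Finset.mul_sum, ← Finset.mul_sum,
    Finset.sum_sub_distrib, Finset.sum_add_distrib]
  simp only [Finset.sum_ite_eq, Finset.mem_univ, if_true]
  unfold Kg
  ring

end Aux2

lemma clamp_mem {t : ℝ} (ht : 0 < t) (K : ℝ) : |clamp t K| ≤ t := by
  unfold clamp
  rw [abs_le]
  constructor
  · exact le_max_left _ _
  · exact max_le (by linarith) (min_le_left _ _)

lemma clamp_opt {t : ℝ} (ht : 0 < t) (K y : ℝ) (hy : |y| ≤ t) :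
    (clamp t K - K) ^ 2 ≤ (y - K) ^ 2 ∧
      ((clamp t K - K) ^ 2 = (y - K) ^ 2 → y = clamp t K) := by
  rw [abs_le] at hy
  unfold clamp
  rcases le_total K (-t) with h | h
  · rw [min_eq_right (by linarith), max_eq_left (by linarith)]
    constructor
    · nlinarith
    · intro he; nlinarith [sq_nonneg (y + t)]
  · rcases le_total t K with h2 | h2
    · rw [min_eq_left h2, max_eq_right (by linarith)]
      constructor
      · nlinarith
      · intro he; nlinarith [sq_nonneg (y - t)]
    · rw [min_eq_right h2, max_eq_right h]
      constructor
      · nlinarith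
      · intro he; nlinarith

section Aux3
set_option linter.unusedSectionVars false
variable {V E : Type*} [Fintype V] [Fintype E] [DecidableEq V] [DecidableEq E]
variable (src tgt : E → V) (u₀ : V → ℝ) {t : ℝ}

lemma Tk_feas (ht : 0 < t) (k : E) (g : E → ℝ) (hg : ∀ e, |g e| ≤ t) :
    ∀ e, |Tk src tgt u₀ t k g e| ≤ t := by
  intro e
  unfold Tk
  by_cases he : e = k
  · subst he; rw [Function.update_self]; exact clamp_mem ht _
  · rw [Function.update_of_ne he]; exact hg e

lemma step_main (ht : 0 < t) (k : E) (g : E → ℝ) (hg : ∀ e, |g e| ≤ t) :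
    (∑ v, (u₀ v - gdiv src tgt (Tk src tgt u₀ t k g) v) ^ 2 ≤
        ∑ v, (u₀ v - gdiv src tgt g v) ^ 2) ∧
      ((∑ v, (u₀ v - gdiv src tgt (Tk src tgt u₀ t k g) v) ^ 2 =
          ∑ v, (u₀ v - gdiv src tgt g v) ^ 2) →
        gdiv src tgt (Tk src tgt u₀ t k g) = gdiv src tgt g ∧
          ∀ e, src e ≠ tgt e → Tk src tgt u₀ t k g e = g e) := by
  by_cases hk : src k = tgt k
  · have hdiv : gdiv src tgt (Tk src tgt u₀ t k g) = gdiv src tgt g := by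
      funext v; exact gdiv_update_loop src tgt g k _ hk v
    refine ⟨le_of_eq (by rw [hdiv]), fun _ => ⟨hdiv, fun e he => ?_⟩⟩
    have hek : e ≠ k := fun h => he (h ▸ hk)
    exact Function.update_of_ne hek _ _
  · set K := Kg src tgt u₀ g k with hK
    have hgself : g = Function.update g k (g k) := (Function.update_eq_self k g).symm
    have hF1 : ∑ v, (u₀ v - gdiv src tgt (Tk src tgt u₀ t k g) v) ^ 2
        = (∑ v, (u₀ v - divWo src tgt k g v) ^ 2) - 4 * K * clamp t K + 2 * (clamp t K) ^ 2 :=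
      F_update src tgt u₀ g k hk _
    have hF0 : ∑ v, (u₀ v - gdiv src tgt g v) ^ 2
        = (∑ v, (u₀ v - divWo src tgt k g v) ^ 2) - 4 * K * g k + 2 * (g k) ^ 2 := by
      conv_lhs => rw [hgself]
      exact F_update src tgt u₀ g k hk _
    obtain ⟨hle, heq⟩ := clamp_opt ht K (g k) (hg k)
    have key : ∑ v, (u₀ v - gdiv src tgt (Tk src tgt u₀ t k g) v) ^ 2
        - ∑ v, (u₀ v - gdiv src tgt g v) ^ 2
        = 2 * ((clamp t K - K) ^ 2 - (g k - K) ^ 2) := by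
      rw [hF1, hF0]; ring
    constructor
    · nlinarith
    · intro he
      rw [he] at key
      have : (clamp t K - K) ^ 2 = (g k - K) ^ 2 := by nlinarith
      have hgk : g k = clamp t K := heq this
      have hTg : Tk src tgt u₀ t k g = g := by
        unfold Tk; rw [← hK, ← hgk]; exact Function.update_eq_self k g
      rw [hTg]
      exact ⟨rfl, fun _ _ => rfl⟩

end Aux3

section Aux4
set_option linter.unusedSectionVars false
variable {V E : Type*} [Fintype V] [Fintype E] [DecidableEq V] [DecidableEq E]
variable (src tgt : E → V) (u₀ : V → ℝ) {t : ℝ}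

lemma Kg_congr (g h : E → ℝ) (k : E) (hdiv : gdiv src tgt h = gdiv src tgt g)
    (hk : h k = g k) : Kg src tgt u₀ h k = Kg src tgt u₀ g k := by
  unfold Kg divWo
  rw [hdiv, hk]

lemma sweep (ht : 0 < t) (L : List E) (g : E → ℝ) (hg : ∀ e, |g e| ≤ t) :
    (∀ e, |L.foldl (fun h k => Tk src tgt u₀ t k h) g e| ≤ t) ∧
    (∑ v, (u₀ v - gdiv src tgt (L.foldl (fun h k => Tk src tgt u₀ t k h) g) v) ^ 2 ≤
      ∑ v, (u₀ v - gdiv src tgt g v) ^ 2) ∧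
    ((∑ v, (u₀ v - gdiv src tgt (L.foldl (fun h k => Tk src tgt u₀ t k h) g) v) ^ 2 =
        ∑ v, (u₀ v - gdiv src tgt g v) ^ 2) →
      gdiv src tgt (L.foldl (fun h k => Tk src tgt u₀ t k h) g) = gdiv src tgt g ∧
        (∀ e, src e ≠ tgt e → L.foldl (fun h k => Tk src tgt u₀ t k h) g e = g e) ∧
        ∀ e ∈ L, src e ≠ tgt e → g e = clamp t (Kg src tgt u₀ g e)) := by
  induction L generalizing g with
  | nil => exact ⟨hg, le_refl _, fun _ => ⟨rfl, fun _ _ => rfl, fun e he => absurd he (by simp)⟩⟩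
  | cons k L ih =>
    simp only [List.foldl_cons]
    set g₁ := Tk src tgt u₀ t k g with hg₁
    obtain ⟨hstep_le, hstep_eq⟩ := step_main src tgt u₀ ht k g hg
    have hg₁f : ∀ e, |g₁ e| ≤ t := Tk_feas src tgt u₀ ht k g hg
    obtain ⟨hf, hle, heqc⟩ := ih g₁ hg₁f
    refine ⟨hf, le_trans hle hstep_le, fun he => ?_⟩
    have h1 : ∑ v, (u₀ v - gdiv src tgt g₁ v) ^ 2 = ∑ v, (u₀ v - gdiv src tgt g v) ^ 2 :=
      le_antisymm hstep_le (he ▸ hle)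
    have h2 : ∑ v, (u₀ v - gdiv src tgt (L.foldl (fun h k => Tk src tgt u₀ t k h) g₁) v) ^ 2
        = ∑ v, (u₀ v - gdiv src tgt g₁ v) ^ 2 := by rw [h1, he]
    obtain ⟨hd1, hv1⟩ := hstep_eq h1
    obtain ⟨hd2, hv2, hc2⟩ := heqc h2
    have hvals : ∀ e, src e ≠ tgt e → g₁ e = g e := hv1
    refine ⟨hd2.trans hd1, fun e hee => (hv2 e hee).trans (hvals e hee), ?_⟩
    intro e heL hee
    rcases List.mem_cons.mp heL with rfl | heL'
    · have : g₁ e = clamp t (Kg src tgt u₀ g e) := Function.update_self _ _ _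
      rw [← hvals e hee]; exact this
    · have hKc : Kg src tgt u₀ g₁ e = Kg src tgt u₀ g e := by
        apply Kg_congr src tgt u₀ g g₁ e hd1
        by_cases hek : e = k
        · subst hek; exact hvals e hee
        · exact Function.update_of_ne hek _ _
      have := hc2 e heL' hee
      rw [hKc] at this
      by_cases hek : e = k
      · subst hek; rw [← hvals e hee]; exact this
      · have hge : g₁ e = g e := Function.update_of_ne hek _ _
        rw [← hge]; exact this

end Aux4

lemma clamp_fixed {t x d : ℝ} (ht : 0 < t) (hx : |x| ≤ t)
    (H : x = clamp t (x + d / 2)) (y : ℝ) (hy : |y| ≤ t) : (y - x) * d ≤ 0 := by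
  rw [abs_le] at hx hy
  unfold clamp at H
  rcases lt_trichotomy d 0 with hd | hd | hd
  · have hx' : x = -t := by
      rcases max_choice (-t) (min t (x + d / 2)) with hc | hc
      · exact H.trans hc
      · have hxm : x = min t (x + d / 2) := H.trans hc
        have : x ≤ x + d / 2 := le_trans hxm.le (min_le_right _ _)
        linarith
    nlinarith
  · simp [hd]
  · have hx' : x = t := by
      by_contra hxt
      have hxlt : x < t := lt_of_le_of_ne hx.2 hxt
      have h1 := le_max_right (-t) (min t (x + d / 2))
      rw [← H] at h1
      have h2 : x < min t (x + d / 2) := lt_min hxlt (by linarith)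
      linarith
    nlinarith

section Aux5
set_option linter.unusedSectionVars false
variable {V E : Type*} [Fintype V] [Fintype E] [DecidableEq V] [DecidableEq E]
variable (src tgt : E → V) (u₀ : V → ℝ)

lemma Kg_formula (g : E → ℝ) (k : E) (hk : src k ≠ tgt k) :
    Kg src tgt u₀ g k = g k +
      ((u₀ (tgt k) - gdiv src tgt g (tgt k)) - (u₀ (src k) - gdiv src tgt g (src k))) / 2 := by
  unfold Kg divWo
  rw [if_neg hk, if_pos rfl, if_pos rfl, if_neg (Ne.symm hk)]
  ring

lemma sum_by_parts (r : V → ℝ) (h : E → ℝ) :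
    ∑ v, r v * gdiv src tgt h v = ∑ e, h e * (r (tgt e) - r (src e)) := by
  have A : ∀ p : E → V, ∑ v, ∑ e, (if p e = v then r v * h e else 0) = ∑ e, r (p e) * h e := by
    intro p
    rw [Finset.sum_comm]
    exact Finset.sum_congr rfl fun e _ => by simp [Finset.sum_ite_eq]
  have B : ∀ v, r v * gdiv src tgt h v
      = (∑ e, if tgt e = v then r v * h e else 0) - (∑ e, if src e = v then r v * h e else 0) := by
    intro v
    unfold gdiv
    rw [mul_sub, Finset.mul_sum, Finset.mul_sum]
    congr 1 <;> exact Finset.sum_congr rfl fun e _ => by split_ifs <;> ring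
  rw [Finset.sum_congr rfl fun v _ => B v, Finset.sum_sub_distrib, A, A, ← Finset.sum_sub_distrib]
  exact Finset.sum_congr rfl fun e _ => by ring

lemma gdiv_sub (a b : E → ℝ) (v : V) :
    gdiv src tgt (fun e => a e - b e) v = gdiv src tgt a v - gdiv src tgt b v := by
  unfold gdiv
  have : ∀ p : E → V, ∑ e, (if p e = v then a e - b e else 0)
      = (∑ e, if p e = v then a e else 0) - (∑ e, if p e = v then b e else 0) := by
    intro p
    rw [← Finset.sum_sub_distrib]
    exact Finset.sum_congr rfl fun e _ => by split_ifs <;> ring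
  rw [this, this]
  ring

end Aux5

theorem stmt14' {V E : Type*} [Fintype V] [Fintype E] [DecidableEq V] [DecidableEq E]
    (src tgt : E → V) (u₀ : V → ℝ) (t : ℝ) (ht : 0 < t)
    (L : List E) (hcov : ∀ e : E, e ∈ L) (ψt : V → ℝ)
    (hmem : ∃ g : E → ℝ, (∀ e : E, |g e| ≤ t) ∧ gdiv src tgt g = ψt)
    (hnear : ∀ ψ : V → ℝ, (∃ g : E → ℝ, (∀ e : E, |g e| ≤ t) ∧ gdiv src tgt g = ψ) →
      ∑ v : V, (u₀ v - ψt v) ^ 2 ≤ ∑ v : V, (u₀ v - ψ v) ^ 2)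
    (g : E → ℝ) (hg : ∀ e : E, |g e| ≤ t) (hne : gdiv src tgt g ≠ ψt) :
    ∑ v : V, (u₀ v - gdiv src tgt (L.foldl (fun h k => Tk src tgt u₀ t k h) g) v) ^ 2 <
      ∑ v : V, (u₀ v - gdiv src tgt g v) ^ 2 := by
  obtain ⟨hf, hle, heqc⟩ := sweep src tgt u₀ ht L g hg
  rcases lt_or_eq_of_le hle with hlt | heq
  · exact hlt
  exfalso
  obtain ⟨hdiv, hvals, hclamp⟩ := heqc heq
  set r : V → ℝ := fun v => u₀ v - gdiv src tgt g v with hr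
  have hsign : ∀ e : E, ∀ y : ℝ, |y| ≤ t → (y - g e) * (r (tgt e) - r (src e)) ≤ 0 := by
    intro e y hy
    by_cases he : src e = tgt e
    · rw [he]; simp
    · have hc := hclamp e (hcov e) he
      rw [Kg_formula src tgt u₀ g e he] at hc
      exact clamp_fixed ht (hg e) hc y hy
  obtain ⟨gψ, hgψ, hdψ⟩ := hmem
  have hsum : ∑ v, r v * (ψt v - gdiv src tgt g v) ≤ 0 := by
    calc ∑ v, r v * (ψt v - gdiv src tgt g v)
        = ∑ v, r v * gdiv src tgt (fun e => gψ e - g e) v :=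
          Finset.sum_congr rfl fun v _ => by rw [gdiv_sub, hdψ]
      _ = ∑ e, (gψ e - g e) * (r (tgt e) - r (src e)) := sum_by_parts src tgt r _
      _ ≤ 0 := Finset.sum_nonpos fun e _ => hsign e (gψ e) (hgψ e)
  have hnear' := hnear (gdiv src tgt g) ⟨g, hg, rfl⟩
  have hexp : ∑ v, (u₀ v - ψt v) ^ 2
      = ∑ v, (u₀ v - gdiv src tgt g v) ^ 2
        - 2 * (∑ v, r v * (ψt v - gdiv src tgt g v))
        + ∑ v, (ψt v - gdiv src tgt g v) ^ 2 := by
    have hpt : ∀ v, (u₀ v - ψt v) ^ 2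
        = (u₀ v - gdiv src tgt g v) ^ 2 - 2 * (r v * (ψt v - gdiv src tgt g v))
          + (ψt v - gdiv src tgt g v) ^ 2 := fun v => by simp only [hr]; ring
    rw [Finset.sum_congr rfl fun v _ => hpt v, Finset.sum_add_distrib, Finset.sum_sub_distrib,
      ← Finset.mul_sum]
  have hq : ∑ v, (ψt v - gdiv src tgt g v) ^ 2 ≤ 0 := by linarith
  have hq0 : ∑ v, (ψt v - gdiv src tgt g v) ^ 2 = 0 :=
    le_antisymm hq (Finset.sum_nonneg fun v _ => sq_nonneg _)
  apply hne
  funext v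
  have hz := (Finset.sum_eq_zero_iff_of_nonneg fun v _ => sq_nonneg
    (ψt v - gdiv src tgt g v)).mp hq0 v (Finset.mem_univ v)
  have := pow_eq_zero_iff (n := 2) (by norm_num) |>.mp hz
  linarith [sub_eq_zero.mp this]

theorem stmt14 {V E : Type*} [Fintype V] [Fintype E] [DecidableEq V] [DecidableEq E]
    (src tgt : E → V) (hconn : GConnected src tgt) (u₀ : V → ℝ) (t : ℝ) (ht : 0 < t)
    (L : List E) (hnd : L.Nodup) (hcov : ∀ e : E, e ∈ L) (ψt : V → ℝ)
    (hmem : ∃ g : E → ℝ, (∀ e : E, |g e| ≤ t) ∧ gdiv src tgt g = ψt)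
    (hnear : ∀ ψ : V → ℝ, (∃ g : E → ℝ, (∀ e : E, |g e| ≤ t) ∧ gdiv src tgt g = ψ) →
      ∑ v : V, (u₀ v - ψt v) ^ 2 ≤ ∑ v : V, (u₀ v - ψ v) ^ 2)
    (g : E → ℝ) (hg : ∀ e : E, |g e| ≤ t) (hne : gdiv src tgt g ≠ ψt) :
    ∑ v : V, (u₀ v - gdiv src tgt (L.foldl (fun h k => Tk src tgt u₀ t k h) g) v) ^ 2 <
      ∑ v : V, (u₀ v - gdiv src tgt g v) ^ 2 :=
  stmt14' src tgt u₀ t ht L hcov ψt hmem hnear g hg hne
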